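/- Let P1, λ13, λ23, N2, N3 be positive reals, and let (λ12(n)) and (P2(n)) be sequences of positive reals with λ12(n) → ∞, P2(n) → ∞, and P2(n)/λ12(n) → 0 as n → ∞. Define R_CF(n) = (1/2)·log(1 + P1·λ13/N3 + P1·P2(n)·λ12(n)·λ23/(P1·(λ13·N2 + λ12(n)·N3) + P2(n)·λ23·N2 + N2·N3)), and U(n) = (1/2)·log(1 + (√(P1·λ13) + √(P2(n)·λ23))²/N3). Then: (a) for all positive parameter values, min over α ∈ [0,1] of the two cut rates f(α) = (1/2)·log(1 + (P1λ13/N3 + P1λ12/N2)(1−α)) and g(α) = (1/2)·log(1 + P1λ13/N3 + P2λ23/N3 + 2√(αλ13λ23P1P2)/N3) satisfies R_CF ≤ sup_{α∈[0,1]} min{f(α), g(α)} ≤ U; and (b) U(n) − R_CF(n) → 0 as n → ∞. -/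

import Mathlib

/-- With `λ12(n) → ∞`, `P2(n) → ∞`, `P2(n)/λ12(n) → 0`: (a) the
compress-and-forward rate `R_CF(n)` is below the cut-set bound
`sup_{α∈[0,1]} min{f(α), g(α)}`, which in turn is below the envelope
`U(n) = (1/2)log(1 + (√(P1λ13) + √(P2(n)λ23))²/N3)`; and (b) `U(n) − R_CF(n) → 0`. -/
theorem stmt13 (P1 lam13 lam23 N2 N3 : ℝ)
    (hP1 : 0 < P1) (hl13 : 0 < lam13) (hl23 : 0 < lam23)
    (hN2 : 0 < N2) (hN3 : 0 < N3)
    (lam12 P2 : ℕ → ℝ) (hl12pos : ∀ n, 0 < lam12 n) (hP2pos : ∀ n, 0 < P2 n)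
    (hl12 : Filter.Tendsto lam12 Filter.atTop Filter.atTop)
    (hP2 : Filter.Tendsto P2 Filter.atTop Filter.atTop)
    (hratio : Filter.Tendsto (fun n => P2 n / lam12 n) Filter.atTop (nhds 0)) :
    (∀ n,
      (1 / 2) * Real.log (1 + P1 * lam13 / N3 +
          P1 * P2 n * lam12 n * lam23 /
            (P1 * (lam13 * N2 + lam12 n * N3) + P2 n * lam23 * N2 + N2 * N3))
        ≤ sSup ((fun α : ℝ =>
            min ((1 / 2) * Real.log
                  (1 + (P1 * lam13 / N3 + P1 * lam12 n / N2) * (1 - α)))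
                ((1 / 2) * Real.log (1 + P1 * lam13 / N3 + P2 n * lam23 / N3 +
                  2 * Real.sqrt (α * lam13 * lam23 * P1 * P2 n) / N3)))
            '' Set.Icc (0 : ℝ) 1) ∧
      sSup ((fun α : ℝ =>
            min ((1 / 2) * Real.log
                  (1 + (P1 * lam13 / N3 + P1 * lam12 n / N2) * (1 - α)))
                ((1 / 2) * Real.log (1 + P1 * lam13 / N3 + P2 n * lam23 / N3 +
                  2 * Real.sqrt (α * lam13 * lam23 * P1 * P2 n) / N3)))
            '' Set.Icc (0 : ℝ) 1)
        ≤ (1 / 2) * Real.log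
            (1 + (Real.sqrt (P1 * lam13) + Real.sqrt (P2 n * lam23)) ^ 2 / N3)) ∧
    Filter.Tendsto
      (fun n =>
        (1 / 2) * Real.log
            (1 + (Real.sqrt (P1 * lam13) + Real.sqrt (P2 n * lam23)) ^ 2 / N3)
          - (1 / 2) * Real.log (1 + P1 * lam13 / N3 +
              P1 * P2 n * lam12 n * lam23 /
                (P1 * (lam13 * N2 + lam12 n * N3) + P2 n * lam23 * N2 + N2 * N3)))
      Filter.atTop (nhds 0) := by
  constructor
  · -- part (a)
    intro n
    have hP2n := hP2pos n
    have hl12n := hl12pos n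
    set D : ℝ := P1 * (lam13 * N2 + lam12 n * N3) + P2 n * lam23 * N2 + N2 * N3 with hDdef
    have hD : 0 < D := by positivity
    set F : ℝ → ℝ := fun α : ℝ =>
      min ((1 / 2) * Real.log
            (1 + (P1 * lam13 / N3 + P1 * lam12 n / N2) * (1 - α)))
          ((1 / 2) * Real.log (1 + P1 * lam13 / N3 + P2 n * lam23 / N3 +
            2 * Real.sqrt (α * lam13 * lam23 * P1 * P2 n) / N3)) with hF
    have hexp : (Real.sqrt (P1 * lam13) + Real.sqrt (P2 n * lam23)) ^ 2
        = P1 * lam13 + P2 n * lam23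
          + 2 * (Real.sqrt (P1 * lam13) * Real.sqrt (P2 n * lam23)) := by
      rw [add_sq, Real.sq_sqrt (by positivity), Real.sq_sqrt (by positivity)]
      ring
    -- every value of F is below U
    have hUb : ∀ x ∈ F '' Set.Icc (0 : ℝ) 1,
        x ≤ (1 / 2) * Real.log
          (1 + (Real.sqrt (P1 * lam13) + Real.sqrt (P2 n * lam23)) ^ 2 / N3) := by
      rintro x ⟨α, hα, rfl⟩
      refine (min_le_right _ _).trans ?_
      have hs : Real.sqrt (α * lam13 * lam23 * P1 * P2 n)
          ≤ Real.sqrt (P1 * lam13) * Real.sqrt (P2 n * lam23) := by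
        rw [← Real.sqrt_mul (by positivity)]
        apply Real.sqrt_le_sqrt
        nlinarith [hα.1, hα.2, mul_pos (mul_pos (mul_pos hl13 hl23) hP1) hP2n]
      have harg : 1 + P1 * lam13 / N3 + P2 n * lam23 / N3 +
            2 * Real.sqrt (α * lam13 * lam23 * P1 * P2 n) / N3
          ≤ 1 + (Real.sqrt (P1 * lam13) + Real.sqrt (P2 n * lam23)) ^ 2 / N3 := by
        rw [hexp, show 1 + (P1 * lam13 + P2 n * lam23
            + 2 * (Real.sqrt (P1 * lam13) * Real.sqrt (P2 n * lam23))) / N3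
            = 1 + P1 * lam13 / N3 + P2 n * lam23 / N3
              + 2 * (Real.sqrt (P1 * lam13) * Real.sqrt (P2 n * lam23)) / N3 by ring]
        gcongr
      gcongr (1 / 2) * Real.log ?_

    have hmem : F 0 ∈ F '' Set.Icc (0 : ℝ) 1 :=
      ⟨0, Set.mem_Icc.mpr ⟨le_refl 0, zero_le_one⟩, rfl⟩
    have hbdd : BddAbove (F '' Set.Icc (0 : ℝ) 1) :=
      ⟨_, fun x hx => hUb x hx⟩
    have hF1 : P1 * P2 n * lam12 n * lam23 / D ≤ P1 * lam12 n / N2 := by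
      rw [div_le_div_iff₀ hD hN2]
      nlinarith [mul_pos hP1 hl12n, mul_pos (mul_pos hP1 hl13) hN2,
        mul_pos hN2 hN3, mul_pos (mul_pos hP1 hl12n) hN3]
    have hF2 : P1 * P2 n * lam12 n * lam23 / D ≤ P2 n * lam23 / N3 := by
      rw [div_le_div_iff₀ hD hN3]
      nlinarith [mul_pos hP2n hl23, mul_pos (mul_pos hP1 hl13) hN2,
        mul_pos hN2 hN3, mul_pos (mul_pos hP2n hl23) hN2]
    have hfrac : 0 ≤ P1 * P2 n * lam12 n * lam23 / D := by positivity
    have h0 : Real.sqrt ((0 : ℝ) * lam13 * lam23 * P1 * P2 n) = 0 := by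
      simp
    have hRCF : (1 / 2) * Real.log (1 + P1 * lam13 / N3 +
        P1 * P2 n * lam12 n * lam23 / D) ≤ F 0 := by
      refine le_min ?_ ?_
      · gcongr (1 / 2) * Real.log ?_
        nlinarith [hF1]
      · gcongr (1 / 2) * Real.log ?_
        rw [h0]
        simp only [mul_zero, zero_div, add_zero]
        linarith [hF2]
    refine ⟨hRCF.trans (le_csSup hbdd hmem), csSup_le ⟨_, hmem⟩ hUb⟩
  · -- part (b)
    set A : ℕ → ℝ := fun n =>
      1 + (Real.sqrt (P1 * lam13) + Real.sqrt (P2 n * lam23)) ^ 2 / N3 with hAdef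
    set B : ℕ → ℝ := fun n => 1 + P1 * lam13 / N3 +
      P1 * P2 n * lam12 n * lam23 /
        (P1 * (lam13 * N2 + lam12 n * N3) + P2 n * lam23 * N2 + N2 * N3) with hBdef
    have hApos : ∀ n, 0 < A n := by
      intro n
      simp only [hAdef]
      positivity
    have hBpos : ∀ n, 0 < B n := by
      intro n
      have := hP2pos n
      have := hl12pos n
      simp only [hBdef]
      positivity
    have hAlim : Filter.Tendsto (fun n => A n / P2 n) Filter.atTop
        (nhds (lam23 / N3)) := by
      have heq : ∀ n, A n / P2 n = (1 + P1 * lam13 / N3) / P2 n + lam23 / N3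
          + (2 / N3) * Real.sqrt (P1 * lam13 * lam23 / P2 n) := by
        intro n
        have hP2n := hP2pos n
        have h1 : Real.sqrt (P1 * lam13 * lam23 / P2 n)
            = Real.sqrt (P1 * lam13) * Real.sqrt (P2 n * lam23) / P2 n := by
          rw [show P1 * lam13 * lam23 / P2 n
              = (P1 * lam13) * (P2 n * lam23) / (P2 n) ^ 2 by
            field_simp]
          rw [Real.sqrt_div (by positivity), Real.sqrt_sq hP2n.le,
            Real.sqrt_mul (by positivity)]
        have e : (Real.sqrt (P1 * lam13) + Real.sqrt (P2 n * lam23)) ^ 2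
            = P1 * lam13 + P2 n * lam23
              + 2 * (Real.sqrt (P1 * lam13) * Real.sqrt (P2 n * lam23)) := by
          rw [add_sq, Real.sq_sqrt (by positivity), Real.sq_sqrt (by positivity)]
          ring
        simp only [hAdef]
        rw [e, h1]
        field_simp
        ring
      have t1 : Filter.Tendsto (fun n => (1 + P1 * lam13 / N3) / P2 n)
          Filter.atTop (nhds 0) := Filter.Tendsto.div_atTop tendsto_const_nhds hP2
      have t2 : Filter.Tendsto (fun n => P1 * lam13 * lam23 / P2 n)
          Filter.atTop (nhds 0) := Filter.Tendsto.div_atTop tendsto_const_nhds hP2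
      have t3 : Filter.Tendsto
          (fun n => (2 / N3) * Real.sqrt (P1 * lam13 * lam23 / P2 n))
          Filter.atTop (nhds ((2 / N3) * Real.sqrt 0)) :=
        ((Real.continuous_sqrt.tendsto 0).comp t2).const_mul _
      have tt := (t1.add (tendsto_const_nhds (x := lam23 / N3))).add t3
      simp only [Real.sqrt_zero, mul_zero, zero_add, add_zero] at tt
      exact Filter.Tendsto.congr (fun n => (heq n).symm) tt
    have hDlim : Filter.Tendsto
        (fun n => (P1 * (lam13 * N2 + lam12 n * N3) + P2 n * lam23 * N2 + N2 * N3)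
          / lam12 n) Filter.atTop (nhds (P1 * N3)) := by
      have heq : ∀ n,
          (P1 * (lam13 * N2 + lam12 n * N3) + P2 n * lam23 * N2 + N2 * N3) / lam12 n
          = P1 * lam13 * N2 / lam12 n + P1 * N3 + (P2 n / lam12 n) * (lam23 * N2)
            + N2 * N3 / lam12 n := by
        intro n
        have h12 := (hl12pos n).ne'
        field_simp
      have t1 : Filter.Tendsto (fun n => P1 * lam13 * N2 / lam12 n)
          Filter.atTop (nhds 0) := Filter.Tendsto.div_atTop tendsto_const_nhds hl12
      have t2 : Filter.Tendsto (fun n => (P2 n / lam12 n) * (lam23 * N2))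
          Filter.atTop (nhds (0 * (lam23 * N2))) := hratio.mul_const _
      have t3 : Filter.Tendsto (fun n => N2 * N3 / lam12 n)
          Filter.atTop (nhds 0) := Filter.Tendsto.div_atTop tendsto_const_nhds hl12
      have tt := ((t1.add (tendsto_const_nhds (x := P1 * N3))).add t2).add t3
      simp only [zero_mul, zero_add, add_zero] at tt
      exact Filter.Tendsto.congr (fun n => (heq n).symm) tt
    have hBlim : Filter.Tendsto (fun n => B n / P2 n) Filter.atTop
        (nhds (lam23 / N3)) := by
      have heq : ∀ n, B n / P2 n = (1 + P1 * lam13 / N3) / P2 n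
          + P1 * lam23 /
            ((P1 * (lam13 * N2 + lam12 n * N3) + P2 n * lam23 * N2 + N2 * N3)
              / lam12 n) := by
        intro n
        have h12 := (hl12pos n).ne'
        have hP2n := (hP2pos n).ne'
        have hDpos : (0 : ℝ) <
            P1 * (lam13 * N2 + lam12 n * N3) + P2 n * lam23 * N2 + N2 * N3 := by
          have := hl12pos n
          have := hP2pos n
          positivity
        simp only [hBdef]
        field_simp
      have t1 : Filter.Tendsto (fun n => (1 + P1 * lam13 / N3) / P2 n)
          Filter.atTop (nhds 0) := Filter.Tendsto.div_atTop tendsto_const_nhds hP2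
      have t2 : Filter.Tendsto (fun n => P1 * lam23 /
          ((P1 * (lam13 * N2 + lam12 n * N3) + P2 n * lam23 * N2 + N2 * N3)
            / lam12 n)) Filter.atTop (nhds (P1 * lam23 / (P1 * N3))) :=
        Filter.Tendsto.div tendsto_const_nhds hDlim (by positivity)
      have tt := t1.add t2
      rw [show (lam23 / N3) = 0 + P1 * lam23 / (P1 * N3) by
        rw [zero_add]; field_simp]
      exact Filter.Tendsto.congr (fun n => (heq n).symm) tt
    have hABlim : Filter.Tendsto (fun n => A n / B n) Filter.atTop (nhds 1) := by
      have heq : ∀ n, A n / B n = (A n / P2 n) / (B n / P2 n) := by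
        intro n
        exact (div_div_div_cancel_right₀ (hP2pos n).ne' (A n) (B n)).symm
      have tt := hAlim.div hBlim (by positivity : (lam23 / N3) ≠ 0)
      rw [show (1 : ℝ) = (lam23 / N3) / (lam23 / N3) by
        rw [div_self (by positivity : (lam23 / N3) ≠ 0)]]
      exact Filter.Tendsto.congr (fun n => (heq n).symm) tt
    have hlog : Filter.Tendsto (fun n => Real.log (A n / B n)) Filter.atTop
        (nhds 0) := by
      have := (Real.continuousAt_log one_ne_zero).tendsto.comp hABlim
      rw [Real.log_one] at this; exact this
    have heqf : ∀ n, (1 / 2) * Real.log (A n / B n)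
        = (1 / 2) * Real.log (A n) - (1 / 2) * Real.log (B n) := by
      intro n
      rw [Real.log_div (hApos n).ne' (hBpos n).ne']
      ring
    have final := hlog.const_mul (1 / 2 : ℝ)
    simp only [mul_zero] at final
    exact Filter.Tendsto.congr (fun n => heqf n) final
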